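/- Let \((\Omega, \mathcal{F}, \mathbb{P})\) be a probability space, \(\mathcal{G}_c, \mathcal{G}_f \subset \mathcal{F}\) sub-\(\sigma\)-algebras, and \(A \in \mathcal{G}_c \cap \mathcal{G}_f\) a set such that \(\mathcal{G}_c \wedge A \subset \mathcal{G}_f \wedge A\), where \(\mathcal{G} \wedge A = \{A \cap B : B \in \mathcal{G}\}\) denotes the trace \(\sigma\)-algebra. Then for every integrable random variable \(X\), almost surely \(\mathbf{1}_A\, \mathbb{E}[X \mid \mathcal{G}_c] = \mathbf{1}_A\, \mathbb{E}[\mathbb{E}[X \mid \mathcal{G}_f] \mid \mathcal{G}_c]\). -/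

import Mathlib

open MeasureTheory


lemma aux_setIntegral_indicator {Ω : Type*} {m0 : MeasurableSpace Ω} {μ : Measure Ω}
    {A s : Set Ω} (hA : MeasurableSet[m0] A) (f : Ω → ℝ) :
    ∫ x in s, A.indicator f x ∂μ = ∫ x in s ∩ A, f x ∂μ :=
  setIntegral_indicator hA

lemma aux_integrableOn_indicator {Ω : Type*} {m0 : MeasurableSpace Ω} {μ : Measure Ω}
    {A s : Set Ω} (hA : MeasurableSet[m0] A) {f : Ω → ℝ} (hf : Integrable f μ) :
    IntegrableOn (A.indicator f) s μ :=
  (hf.indicator hA).integrableOn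

/-- Localized tower property for conditional expectation: if `A ∈ 𝒢_c ∩ 𝒢_f` and the
trace of `𝒢_c` on `A` is contained in the trace of `𝒢_f` on `A`, then for every
integrable `X`, almost surely `1_A 𝔼[X | 𝒢_c] = 1_A 𝔼[𝔼[X | 𝒢_f] | 𝒢_c]`. -/
theorem localized_tower_property {Ω : Type*} {m0 : MeasurableSpace Ω}
    (μ : Measure Ω) [IsProbabilityMeasure μ]
    (Gc Gf : MeasurableSpace Ω) (hGc : Gc ≤ m0) (hGf : Gf ≤ m0)
    (A : Set Ω) (hAc : MeasurableSet[Gc] A) (hAf : MeasurableSet[Gf] A)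
    (htrace : ∀ B : Set Ω, MeasurableSet[Gc] B →
      ∃ B' : Set Ω, MeasurableSet[Gf] B' ∧ A ∩ B = A ∩ B')
    (X : Ω → ℝ) (hX : Integrable X μ) :
    A.indicator (μ[X | Gc]) =ᵐ[μ] A.indicator (μ[μ[X | Gf] | Gc]) := by
  have hmA : MeasurableSet[m0] A := hGc A hAc
  have hXf : Integrable (μ[X | Gf]) μ := integrable_condExp
  refine ae_eq_of_forall_setIntegral_eq_of_sigmaFinite' hGc
    (fun s _ _ => aux_integrableOn_indicator hmA integrable_condExp)
    (fun s _ _ => aux_integrableOn_indicator hmA integrable_condExp)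
    (fun s hs _ => ?_)
    ((stronglyMeasurable_condExp.indicator hAc).aestronglyMeasurable
      )
    ((stronglyMeasurable_condExp.indicator hAc).aestronglyMeasurable
      )
  rw [aux_setIntegral_indicator hmA _, aux_setIntegral_indicator hmA _]
  have hsA : MeasurableSet[Gc] (s ∩ A) := hs.inter hAc
  obtain ⟨B', hB', hAB'⟩ := htrace s hs
  have hsAf : MeasurableSet[Gf] (s ∩ A) := by
    rw [Set.inter_comm, hAB']
    exact hAf.inter hB'
  rw [setIntegral_condExp hGc hX hsA, setIntegral_condExp hGc hXf hsA,
    setIntegral_condExp hGf hX hsAf]
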